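/- Let A = (X, S, s₀, δ) be a deterministic finite automaton and T ⊆ 2^S a table all of whose loops are maximal (i.e., every Z ∈ T ∩ LOOP_A is a strongly connected component). Then there exists a deterministic Büchi automaton (A', T') with at most O(|S|²) states such that L(A, T) = {ξ : Inf(A', ξ) ∩ T' ≠ ∅}. -/

import Mathlib

open Set

/-- `w` is a finite prefix of the infinite word `ξ`. -/
def InfPrefix {X : Type*} (w : List X) (ξ : ℕ → X) : Prop :=
  ∀ i : Fin w.length, w.get i = ξ i.val

/-- The set of finite prefixes of elements of `F`. -/
def Pref {X : Type*} (F : Set (ℕ → X)) : Set (List X) :=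
  {w | ∃ ξ ∈ F, InfPrefix w ξ}

/-- Concatenation of a finite word in front of an infinite word. -/
def wordCat {X : Type*} (w : List X) (ξ : ℕ → X) : ℕ → X :=
  fun n => if h : n < w.length then w.get ⟨n, h⟩ else ξ (n - w.length)


/-- A deterministic automaton with initial state and transition function. -/
structure DetAuto (X S : Type*) where
  start : S
  step : S → X → S

/-- The extension of the transition function to finite words. -/
def DetAuto.run {X S : Type*} (A : DetAuto X S) (s : S) (w : List X) : S :=
  w.foldl A.step s

/-- The state reached after reading the first `n` letters of `ξ`. -/
def DetAuto.statesAt {X S : Type*} (A : DetAuto X S) (ξ : ℕ → X) (n : ℕ) : S :=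
  A.run A.start (List.ofFn fun i : Fin n => ξ i.val)

/-- `Inf(A, ξ)`: the set of states visited infinitely often on input `ξ`. -/
def AInf {X S : Type*} (A : DetAuto X S) (ξ : ℕ → X) : Set S :=
  {s | ∀ n : ℕ, ∃ m ≥ n, A.statesAt ξ m = s}

/-- Muller acceptance: `L(A, T)`. -/
def Lang {X S : Type*} (A : DetAuto X S) (T : Set (Set S)) : Set (ℕ → X) :=
  {ξ | AInf A ξ ∈ T}

/-- `LOOP_A`: the set of realizable infinity sets. -/
def Loops {X S : Type*} (A : DetAuto X S) : Set (Set S) :=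
  {Z | ∃ ξ : ℕ → X, AInf A ξ = Z}

/-- Strongly connected components: the loops maximal w.r.t. inclusion, i.e.
any other loop is contained in them or disjoint from them. -/
def IsSCC {X S : Type*} (A : DetAuto X S) (Z : Set S) : Prop :=
  Z ∈ Loops A ∧ ∀ Z' ∈ Loops A, Z' ⊆ Z ∨ Z' ∩ Z = ∅

/-- The relation `Z₁ ↦ Z₂`. -/
def ReachRel {X S : Type*} (A : DetAuto X S) (Z₁ Z₂ : Set S) : Prop :=
  Z₁ ≠ Z₂ ∧ ∃ s ∈ Z₁, ∃ w : List X, A.run s w ∈ Z₂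

/-- Terminal strongly connected components. -/
def IsTerminalSCC {X S : Type*} (A : DetAuto X S) (Z : Set S) : Prop :=
  IsSCC A Z ∧ ∀ Z' : Set S, IsSCC A Z' → Z ≠ Z' → ¬ ReachRel A Z Z'


section MB

variable {X S : Type*}

lemma statesAt_succ (A : DetAuto X S) (ξ : ℕ → X) (m : ℕ) :
    A.statesAt ξ (m + 1) = A.step (A.statesAt ξ m) (ξ m) := by
  unfold DetAuto.statesAt DetAuto.run
  rw [List.ofFn_succ']
  simp

open Classical in
noncomputable def Zof (A : DetAuto X S) (T : Set (Set S)) (s : S) : Option (Set S) :=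
  if h : ∃ Z, Z ∈ T ∧ Z ∈ Loops A ∧ s ∈ Z then some h.choose else none

lemma Zof_spec {A : DetAuto X S} {T : Set (Set S)} {s : S} {Z : Set S}
    (h : Zof A T s = some Z) : Z ∈ T ∧ Z ∈ Loops A ∧ s ∈ Z := by
  unfold Zof at h
  split at h
  next hex => cases h; exact hex.choose_spec
  next => cases h

lemma scc_unique {A : DetAuto X S} {T : Set (Set S)}
    (hT : ∀ Z ∈ T, Z ∈ Loops A → IsSCC A Z) {Z₁ Z₂ : Set S} {s : S}
    (h₁T : Z₁ ∈ T) (h₁L : Z₁ ∈ Loops A) (h₂T : Z₂ ∈ T) (h₂L : Z₂ ∈ Loops A)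
    (hs₁ : s ∈ Z₁) (hs₂ : s ∈ Z₂) : Z₁ = Z₂ := by
  have S₁ := hT Z₁ h₁T h₁L
  have S₂ := hT Z₂ h₂T h₂L
  rcases S₂.2 Z₁ S₁.1 with h | h
  · rcases S₁.2 Z₂ S₂.1 with h' | h'
    · exact Set.Subset.antisymm h h'
    · exact absurd (Set.mem_inter hs₂ hs₁) (by rw [h']; exact id)
  · exact absurd (Set.mem_inter hs₁ hs₂) (by rw [h]; exact id)

lemma Zof_eq {A : DetAuto X S} {T : Set (Set S)}
    (hT : ∀ Z ∈ T, Z ∈ Loops A → IsSCC A Z) {Z : Set S} {s : S}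
    (hZT : Z ∈ T) (hZL : Z ∈ Loops A) (hs : s ∈ Z) : Zof A T s = some Z := by
  have hex : ∃ Z', Z' ∈ T ∧ Z' ∈ Loops A ∧ s ∈ Z' := ⟨Z, hZT, hZL, hs⟩
  unfold Zof
  rw [dif_pos hex]
  congr 1
  exact scc_unique hT hex.choose_spec.1 hex.choose_spec.2.1 hZT hZL hex.choose_spec.2.2 hs


variable [Fintype S] [Nonempty S]

instance : NeZero (Fintype.card S) := ⟨Fintype.card_ne_zero⟩

/-- enumeration of states -/
noncomputable def ee (S : Type*) [Fintype S] : Fin (Fintype.card S) ≃ S :=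
  (Fintype.equivFin S).symm

open Classical in
/-- update of the obligation component -/
noncomputable def pupd (A : DetAuto X S) (T : Set (Set S)) (s : S)
    (p : Option (Fin (Fintype.card S))) (s' : S) : Option (Fin (Fintype.card S)) :=
  match Zof A T s' with
  | none => none
  | some Z => some (match p with
      | none => (ee S).symm A.start
      | some c => if s = ee S c ∨ ee S c ∉ Z then c + 1 else c)

/-- the Büchi automaton -/
noncomputable def BA (A : DetAuto X S) (T : Set (Set S)) :
    DetAuto X (S × Option (Fin (Fintype.card S))) where
  start := (A.start, none)
  step := fun q x => (A.step q.1 x, pupd A T q.1 q.2 (A.step q.1 x))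

/-- the accepting set -/
def BAcc (A : DetAuto X S) (T : Set (Set S)) : Set (S × Option (Fin (Fintype.card S))) :=
  {q | ∃ (i : Fin (Fintype.card S)) (Z : Set S), q = (ee S i, some i) ∧
    Zof A T (ee S i) = some Z ∧ ∀ j, i < j → ee S j ∉ Z}

lemma BA_fst (A : DetAuto X S) (T : Set (Set S)) (ξ : ℕ → X) (m : ℕ) :
    ((BA A T).statesAt ξ m).1 = A.statesAt ξ m := by
  induction m with
  | zero => rfl
  | succ m ih =>
    rw [statesAt_succ, statesAt_succ]
    show (A.step ((BA A T).statesAt ξ m).1 (ξ m), _).1 = _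
    rw [ih]

lemma BA_snd (A : DetAuto X S) (T : Set (Set S)) (ξ : ℕ → X) (m : ℕ) :
    ((BA A T).statesAt ξ (m + 1)).2 =
      pupd A T (A.statesAt ξ m) ((BA A T).statesAt ξ m).2 (A.statesAt ξ (m + 1)) := by
  rw [statesAt_succ]
  show pupd A T ((BA A T).statesAt ξ m).1 _ (A.step ((BA A T).statesAt ξ m).1 (ξ m)) = _
  rw [BA_fst, ← statesAt_succ]


open Classical in
lemma p_step_some {A : DetAuto X S} {T : Set (Set S)} {ξ : ℕ → X} {N : ℕ} {Z : Set S}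
    (H1 : ∀ m, N ≤ m → Zof A T (A.statesAt ξ (m+1)) = some Z)
    {m : ℕ} (hm : N ≤ m) {c : Fin (Fintype.card S)}
    (hc : ((BA A T).statesAt ξ m).2 = some c) :
    ((BA A T).statesAt ξ (m+1)).2 =
      some (if A.statesAt ξ m = ee S c ∨ ee S c ∉ Z then c + 1 else c) := by
  rw [BA_snd, hc]
  simp only [pupd]
  rw [H1 m hm]

lemma p_step_isSome {A : DetAuto X S} {T : Set (Set S)} {ξ : ℕ → X} {N : ℕ} {Z : Set S}
    (H1 : ∀ m, N ≤ m → Zof A T (A.statesAt ξ (m+1)) = some Z)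
    {m : ℕ} (hm : N ≤ m) :
    ∃ c, ((BA A T).statesAt ξ (m+1)).2 = some c := by
  rw [BA_snd]
  simp only [pupd]
  rw [H1 m hm]
  cases ((BA A T).statesAt ξ m).2 <;> exact ⟨_, rfl⟩

open Classical in
lemma first_change {A : DetAuto X S} {T : Set (Set S)} {ξ : ℕ → X} {N : ℕ} {Z : Set S}
    (H1 : ∀ m, N ≤ m → Zof A T (A.statesAt ξ (m+1)) = some Z)
    {m m' : ℕ} {c : Fin (Fintype.card S)} (hm : N ≤ m) (hmm : m ≤ m')
    (hc : ((BA A T).statesAt ξ m).2 = some c)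
    (hne : ((BA A T).statesAt ξ m').2 ≠ some c) :
    ∃ t, m ≤ t ∧ ((BA A T).statesAt ξ t).2 = some c ∧
      (A.statesAt ξ t = ee S c ∨ ee S c ∉ Z) ∧
      ((BA A T).statesAt ξ (t+1)).2 = some (c+1) := by
  classical
  have hex : ∃ k, ((BA A T).statesAt ξ (m + k)).2 ≠ some c :=
    ⟨m' - m, by rwa [Nat.add_sub_cancel' hmm]⟩
  have hk : ((BA A T).statesAt ξ (m + Nat.find hex)).2 ≠ some c := Nat.find_spec hex
  have hk0 : Nat.find hex ≠ 0 := by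
    intro h; rw [h] at hk; exact hk hc
  obtain ⟨k', hkk⟩ : ∃ k', Nat.find hex = k' + 1 :=
    ⟨Nat.find hex - 1, (Nat.succ_pred_eq_of_ne_zero hk0).symm⟩
  have hprev : ((BA A T).statesAt ξ (m + k')).2 = some c := by
    have := Nat.find_min hex (show k' < Nat.find hex by omega)
    exact not_not.mp this
  have hstep := p_step_some H1 (le_trans hm (Nat.le_add_right m k')) hprev
  by_cases hcond : A.statesAt ξ (m + k') = ee S c ∨ ee S c ∉ Z
  · refine ⟨m + k', Nat.le_add_right _ _, hprev, hcond, ?_⟩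
    rwa [if_pos hcond] at hstep
  · rw [if_neg hcond] at hstep
    rw [hkk, ← Nat.add_assoc] at hk
    exact absurd hstep hk

omit [Nonempty S] in
lemma eventually_aInf (A : DetAuto X S) (ξ : ℕ → X) :
    ∃ N, ∀ m, N ≤ m → A.statesAt ξ m ∈ AInf A ξ := by
  classical
  have h : ∀ s : S, ∃ Ns : ℕ, s ∉ AInf A ξ → ∀ m, Ns ≤ m → A.statesAt ξ m ≠ s := by
    intro s
    by_cases hs : s ∈ AInf A ξ
    · exact ⟨0, fun h => absurd hs h⟩
    · have : ¬ ∀ n : ℕ, ∃ m ≥ n, A.statesAt ξ m = s := hs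
      push_neg at this
      obtain ⟨Ns, hNs⟩ := this
      exact ⟨Ns, fun _ m hm => hNs m hm⟩
  choose f hf using h
  refine ⟨Finset.univ.sup f, fun m hm => ?_⟩
  by_contra hmem
  exact hf _ hmem m (le_trans (Finset.le_sup (Finset.mem_univ _)) hm) rfl


open Classical Fin.NatCast Fin.CommRing in
lemma accept_of_mem {A : DetAuto X S} {T : Set (Set S)}
    (hT : ∀ Z ∈ T, Z ∈ Loops A → IsSCC A Z) {ξ : ℕ → X} (hξ : AInf A ξ ∈ T) :
    ∃ q, q ∈ AInf (BA A T) ξ ∧ q ∈ BAcc A T := by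
  set Z := AInf A ξ with hZdef
  have hZL : Z ∈ Loops A := ⟨ξ, rfl⟩
  obtain ⟨N, hN⟩ := eventually_aInf A ξ
  have H1 : ∀ m, N ≤ m → Zof A T (A.statesAt ξ (m+1)) = some Z :=
    fun m hm => Zof_eq hT hξ hZL (hN (m+1) (by omega))
  -- the maximal index of Z
  have hFne : ((Finset.univ : Finset (Fin (Fintype.card S))).filter
      (fun i => ee S i ∈ Z)).Nonempty := by
    refine ⟨(ee S).symm (A.statesAt ξ N), ?_⟩
    simp only [Finset.mem_filter, Finset.mem_univ, true_and, Equiv.apply_symm_apply]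
    exact hN N le_rfl
  set iMax := ((Finset.univ : Finset (Fin (Fintype.card S))).filter
      (fun i => ee S i ∈ Z)).max' hFne with hiMaxdef
  have hiMaxZ : ee S iMax ∈ Z := by
    have := Finset.max'_mem _ hFne
    simp only [Finset.mem_filter] at this
    exact this.2
  have hmax : ∀ j, iMax < j → ee S j ∉ Z := by
    intro j hj hmem
    have : j ≤ iMax := Finset.le_max' _ j (by simp [Finset.mem_filter, hmem])
    omega
  -- progress
  have adv1 : ∀ m c, N ≤ m → ((BA A T).statesAt ξ m).2 = some c →
      ∃ t, m ≤ t ∧ ((BA A T).statesAt ξ t).2 = some c ∧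
        (A.statesAt ξ t = ee S c ∨ ee S c ∉ Z) ∧
        ((BA A T).statesAt ξ (t+1)).2 = some (c+1) := by
    intro m c hm hc
    by_cases hch : ∃ m', m ≤ m' ∧ ((BA A T).statesAt ξ m').2 ≠ some c
    · obtain ⟨m', hmm', hne⟩ := hch
      exact first_change H1 hm hmm' hc hne
    · push_neg at hch
      by_cases hcond : ∃ t, m ≤ t ∧ (A.statesAt ξ t = ee S c ∨ ee S c ∉ Z)
      · obtain ⟨t, hmt, hcondt⟩ := hcond
        have hpt := hch t hmt
        have hstep := p_step_some H1 (hm.trans hmt) hpt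
        rw [if_pos hcondt] at hstep
        exact ⟨t, hmt, hpt, hcondt, hstep⟩
      · exfalso
        push_neg at hcond
        have h1 : ee S c ∈ Z := (hcond m le_rfl).2
        obtain ⟨t, ht, hst⟩ := h1 m
        exact (hcond t ht).1 hst
  have advk : ∀ m c, N ≤ m → ((BA A T).statesAt ξ m).2 = some c → ∀ k : ℕ,
      ∃ t, m ≤ t ∧ ((BA A T).statesAt ξ t).2 = some (c + (k : Fin (Fintype.card S))) := by
    intro m c hm hc k
    induction k with
    | zero => exact ⟨m, le_rfl, by simpa using hc⟩
    | succ k ih =>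
      obtain ⟨t, hmt, hpt⟩ := ih
      obtain ⟨t', htt', _, _, hstep⟩ := adv1 t _ (hm.trans hmt) hpt
      refine ⟨t'+1, by omega, ?_⟩
      rw [hstep]
      congr 1
      push_cast
      ring
  refine ⟨(ee S iMax, some iMax), ?_, ⟨iMax, Z, rfl, Zof_eq hT hξ hZL hiMaxZ, hmax⟩⟩
  intro M
  obtain ⟨c, hc⟩ := p_step_isSome H1 (le_max_left N M)
  set m₀ := max N M + 1 with hm₀
  have hm₀N : N ≤ m₀ := by omega
  obtain ⟨t, hmt, hpt⟩ := advk m₀ c hm₀N hc ((iMax - c).val)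
  rw [Fin.cast_val_eq_self, add_comm, sub_add_cancel] at hpt
  obtain ⟨t', htt', hpt', hcond, _⟩ := adv1 t iMax (hm₀N.trans hmt) hpt
  have hst' : A.statesAt ξ t' = ee S iMax := by
    rcases hcond with h | h
    · exact h
    · exact absurd hiMaxZ h
  refine ⟨t', by omega, ?_⟩
  have hfst := BA_fst A T ξ t'
  exact Prod.ext (by rw [hfst, hst']) hpt'


open Classical Fin.NatCast Fin.CommRing in
lemma mem_of_accept {A : DetAuto X S} {T : Set (Set S)}
    (hT : ∀ Z ∈ T, Z ∈ Loops A → IsSCC A Z) {ξ : ℕ → X} {q : S × Option (Fin (Fintype.card S))}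
    (hq : q ∈ AInf (BA A T) ξ) (hacc : q ∈ BAcc A T) : AInf A ξ ∈ T := by
  obtain ⟨i, Z, rfl, hZof, hmax⟩ := hacc
  obtain ⟨hZT, hZL, hiZ⟩ := Zof_spec hZof
  have hinf : ∀ M, ∃ m, M ≤ m ∧ (BA A T).statesAt ξ m = (ee S i, some i) := by
    intro M; obtain ⟨m, hm, h⟩ := hq M; exact ⟨m, hm, h⟩
  have hiInf : ee S i ∈ AInf A ξ := by
    intro M
    obtain ⟨m, hm, h⟩ := hinf M
    exact ⟨m, hm, by rw [← BA_fst A T ξ m, h]⟩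
  have hsub : AInf A ξ ⊆ Z := by
    rcases (hT Z hZT hZL).2 (AInf A ξ) ⟨ξ, rfl⟩ with h | h
    · exact h
    · exact absurd (Set.mem_inter hiInf hiZ) (by rw [h]; exact id)
  obtain ⟨N, hN⟩ := eventually_aInf A ξ
  have H1 : ∀ m, N ≤ m → Zof A T (A.statesAt ξ (m+1)) = some Z :=
    fun m hm => Zof_eq hT hZT hZL (hsub (hN (m+1) (by omega)))
  set P : Fin (Fintype.card S) → Prop := fun c =>
    ∀ M, ∃ m, M ≤ m ∧ N ≤ m ∧ ((BA A T).statesAt ξ m).2 = some c with hPdef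
  have hPi : P i := by
    intro M
    obtain ⟨m, hm, h⟩ := hinf (max M N)
    exact ⟨m, by omega, by omega, by rw [h]⟩
  have hstepP : ∀ c, P c → P (c+1) := by
    intro c hc M
    by_cases hci : c = i
    · subst hci
      obtain ⟨m, hm, h⟩ := hinf (max M N)
      have hs : A.statesAt ξ m = ee S c := by rw [← BA_fst A T ξ m, h]
      have hp : ((BA A T).statesAt ξ m).2 = some c := by rw [h]
      have hstep := p_step_some H1 (show N ≤ m by omega) hp
      rw [if_pos (Or.inl hs)] at hstep
      exact ⟨m+1, by omega, by omega, hstep⟩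
    · obtain ⟨m, hm1, hm2, hpm⟩ := hc (max M N)
      obtain ⟨m', hm'1, _, hpm'⟩ := hPi m
      have hne : ((BA A T).statesAt ξ m').2 ≠ some c := by
        rw [hpm']
        intro h
        exact hci (Option.some.inj h).symm
      obtain ⟨t, hmt, _, _, hstep⟩ := first_change H1 hm2 hm'1 hpm hne
      exact ⟨t+1, by omega, by omega, hstep⟩
  have hPall : ∀ c, P c := by
    have hk : ∀ k : ℕ, P (i + (k : Fin (Fintype.card S))) := by
      intro k
      induction k with
      | zero => simpa using hPi
      | succ k ih =>
        have := hstepP _ ih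
        have heq : i + ((k:ℕ)+1 : ℕ) = i + (k : Fin (Fintype.card S)) + 1 := by
          push_cast; ring
        rwa [heq]
    intro c
    have := hk ((c - i).val)
    rwa [Fin.cast_val_eq_self, add_comm, sub_add_cancel] at this
  have hsup : Z ⊆ AInf A ξ := by
    intro z hz
    obtain ⟨j, rfl⟩ : ∃ j, ee S j = z := ⟨(ee S).symm z, by simp⟩
    by_cases hji : j = i
    · subst hji; exact hiInf
    · intro M
      obtain ⟨m, hm1, hm2, hpm⟩ := hPall j M
      obtain ⟨m', hm'1, _, hpm'⟩ := hPi m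
      have hne : ((BA A T).statesAt ξ m').2 ≠ some j := by
        rw [hpm']
        intro h
        exact hji (Option.some.inj h).symm
      obtain ⟨t, hmt, _, hcond, _⟩ := first_change H1 hm2 hm'1 hpm hne
      rcases hcond with h | h
      · exact ⟨t, by omega, h⟩
      · exact absurd hz h
  have heq : AInf A ξ = Z := Set.Subset.antisymm hsub hsup
  rw [heq]
  exact hZT


omit [Fintype S] [Nonempty S] in
lemma transport_statesAt {S₂ : Type*} (B : DetAuto X S) (σ : S ≃ S₂) (ξ : ℕ → X) (m : ℕ) :
    (DetAuto.mk (σ B.start) (fun s x => σ (B.step (σ.symm s) x)) : DetAuto X S₂).statesAt ξ m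
      = σ (B.statesAt ξ m) := by
  induction m with
  | zero => rfl
  | succ m ih =>
    rw [statesAt_succ, statesAt_succ, ih]
    show σ (B.step (σ.symm (σ _)) _) = _
    rw [Equiv.symm_apply_apply]

omit [Fintype S] [Nonempty S] in
lemma transport_aInf {S₂ : Type*} (B : DetAuto X S) (σ : S ≃ S₂) (ξ : ℕ → X) :
    AInf (DetAuto.mk (σ B.start) (fun s x => σ (B.step (σ.symm s) x)) : DetAuto X S₂) ξ
      = σ '' AInf B ξ := by
  ext s
  constructor
  · intro hs
    refine ⟨σ.symm s, ?_, by simp⟩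
    intro M
    obtain ⟨m, hm, h⟩ := hs M
    rw [transport_statesAt] at h
    exact ⟨m, hm, by rw [← h, Equiv.symm_apply_apply]⟩
  · rintro ⟨z, hz, rfl⟩
    intro M
    obtain ⟨m, hm, h⟩ := hz M
    exact ⟨m, hm, by rw [transport_statesAt, h]⟩

end MB

/-- Muller to Büchi conversion with a quadratic bound, for tables all of
whose loops are maximal (i.e. strongly connected components). -/
theorem muller_to_buchi {X S : Type*} [Fintype X] [Fintype S]
    (A : DetAuto X S) (T : Set (Set S))
    (hT : ∀ Z ∈ T, Z ∈ Loops A → IsSCC A Z) :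
    ∃ (S' : Type) (_ : Fintype S') (A' : DetAuto X S') (T' : Set S'),
      Fintype.card S' ≤ Fintype.card S * (Fintype.card S + 1) ∧
      Lang A T = {ξ : ℕ → X | (AInf A' ξ ∩ T').Nonempty} := by
  haveI : Nonempty S := ⟨A.start⟩
  set n := Fintype.card S with hn
  set σ : (S × Option (Fin n)) ≃ (Fin n × Option (Fin n)) :=
    Equiv.prodCongr (Fintype.equivFin S) (Equiv.refl _) with hσ
  refine ⟨Fin n × Option (Fin n), inferInstance,
    DetAuto.mk (σ (BA A T).start) (fun s x => σ ((BA A T).step (σ.symm s) x)),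
    σ '' BAcc A T, ?_, ?_⟩
  · simp
  · ext ξ
    simp only [Set.mem_setOf_eq]
    rw [transport_aInf]
    constructor
    · intro hξ
      obtain ⟨q, hq1, hq2⟩ := accept_of_mem hT hξ
      exact ⟨σ q, ⟨q, hq1, rfl⟩, ⟨q, hq2, rfl⟩⟩
    · rintro ⟨q', ⟨q, hq1, rfl⟩, q₂, hq2, hq⟩
      have : q₂ = q := σ.injective hq
      subst this
      exact mem_of_accept hT hq1 hq2
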